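/- Let k > 0 and let θ : [t₀, t₁] → ℝ be a C¹ solution of θ'(t) = −k·sin(θ(t)) with θ(t) ∈ (0, π) for all t ∈ [t₀, t₁]. Then for all t ∈ [t₀, t₁]: csc(θ(t)) + cot(θ(t)) = (csc(θ(t₀)) + cot(θ(t₀)))·e^{k(t − t₀)}. -/

import Mathlib

open Real

/-- Explicit integration of `θ' = −k sin θ` by separation of variables: along a solution
taking values in `(0, π)`, the quantity `csc θ + cot θ` grows exponentially at rate `k`. -/
theorem csc_cot_exponential_growth
    (k t₀ t₁ : ℝ) (hk : 0 < k) (ht : t₀ ≤ t₁)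
    (θ : ℝ → ℝ)
    (hran : ∀ t ∈ Set.Icc t₀ t₁, θ t ∈ Set.Ioo 0 π)
    (hode : ∀ t ∈ Set.Icc t₀ t₁, HasDerivAt θ (-k * sin (θ t)) t) :
    ∀ t ∈ Set.Icc t₀ t₁,
      1 / sin (θ t) + cos (θ t) / sin (θ t)
        = (1 / sin (θ t₀) + cos (θ t₀) / sin (θ t₀)) * exp (k * (t - t₀)) := by
  have hsin : ∀ t ∈ Set.Icc t₀ t₁, sin (θ t) ≠ 0 := fun t ht' =>
    ne_of_gt (Real.sin_pos_of_pos_of_lt_pi (hran t ht').1 (hran t ht').2)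
  set g : ℝ → ℝ := fun t => (1 + cos (θ t)) / sin (θ t) * exp (-k * (t - t₀)) with hg
  have hgd : ∀ t ∈ Set.Icc t₀ t₁, HasDerivAt g 0 t := by
    intro t ht'
    have hu := hode t ht'
    have hs := hsin t ht'
    have h1 : HasDerivAt (fun t => (1 + cos (θ t)) / sin (θ t))
        (k * ((1 + cos (θ t)) / sin (θ t))) t := by
      have hc : HasDerivAt (fun t => 1 + cos (θ t)) (-sin (θ t) * (-k * sin (θ t))) t :=
        ((Real.hasDerivAt_cos (θ t)).comp t hu).const_add 1
      have hsd : HasDerivAt (fun t => sin (θ t)) (cos (θ t) * (-k * sin (θ t))) t :=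
        (Real.hasDerivAt_sin (θ t)).comp t hu
      have hdiv := hc.div hsd hs
      convert hdiv using 1
      · rfl
      · rfl
      · rfl
      field_simp
      linear_combination (-1 : ℝ) * (sin_sq_add_cos_sq (θ t))
    have h2 : HasDerivAt (fun t => exp (-k * (t - t₀))) (-k * exp (-k * (t - t₀))) t := by
      have hlin : HasDerivAt (fun t : ℝ => -k * (t - t₀)) (-k) t := by
        simpa using (((hasDerivAt_id t).sub_const t₀).const_mul (-k))
      simpa [mul_comm, Function.comp_def] using (Real.hasDerivAt_exp (-k * (t - t₀))).comp t hlin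
    have hmul := h1.mul h2
    convert hmul using 1
    · rfl
    · rfl
    · rfl
    ring
  have hcont : ContinuousOn g (Set.Icc t₀ t₁) :=
    fun t ht' => (hgd t ht').continuousAt.continuousWithinAt
  have key := constant_of_has_deriv_right_zero hcont
    (fun t ht' => ((hgd t (Set.mem_Icc_of_Ico ht')).hasDerivWithinAt))
  intro t ht'
  have hgt := key t ht'
  have hs := hsin t ht'
  have hs0 := hsin t₀ (Set.left_mem_Icc.2 ht)
  simp only [hg] at hgt
  rw [sub_self, mul_zero, Real.exp_zero, mul_one] at hgt
  have hexp : exp (-k * (t - t₀)) * exp (k * (t - t₀)) = 1 := by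
    rw [← Real.exp_add]; ring_nf; exact Real.exp_zero
  have h3 : (1 + cos (θ t)) / sin (θ t) = (1 + cos (θ t₀)) / sin (θ t₀) * exp (k * (t - t₀)) := by
    calc (1 + cos (θ t)) / sin (θ t)
        = (1 + cos (θ t)) / sin (θ t) * (exp (-k * (t - t₀)) * exp (k * (t - t₀))) := by
          rw [hexp, mul_one]
      _ = ((1 + cos (θ t)) / sin (θ t) * exp (-k * (t - t₀))) * exp (k * (t - t₀)) := by ring
      _ = (1 + cos (θ t₀)) / sin (θ t₀) * exp (k * (t - t₀)) := by rw [hgt]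
  field_simp at h3 ⊢
  linarith [h3]
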